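/- (Sufficiency part of Theorem 1.) Suppose there exist symmetric matrices P_t ∈ ℝ^{n×n} (t ∈ {0,…,N}) with P_N = H, matrices K_t ∈ ℝ^{m×n} and vectors v_t ∈ ℝ^m (t ∈ {0,…,N−1}) such that, writing R̂_t = R_t + B_t′P_{t+1}B_t, for every t: R̂_t is positive semidefinite, R̂_t K_t = −(B_t′P_{t+1}A_t + S_t), P_t = Q_t + A_t′P_{t+1}A_t + (A_t′P_{t+1}B_t + S_t′)K_t, and R̂_t v_t = 0. Then (K, v) is a closed-loop optimal solution of Problem (LQ), and moreover for every x₀ ∈ ℝⁿ the value function satisfies V(x₀) := inf_u J(x₀,u) = x₀′P₀x₀. -/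

import Mathlib

open Matrix Finset

noncomputable section

/-- State trajectory of the discrete-time linear system `x_{t+1} = A_t x_t + B_t u_t`. -/
def lqState {n m : ℕ} (A : ℕ → Matrix (Fin n) (Fin n) ℝ) (B : ℕ → Matrix (Fin n) (Fin m) ℝ)
    (x₀ : Fin n → ℝ) (u : ℕ → Fin m → ℝ) : ℕ → Fin n → ℝ
  | 0 => x₀
  | t + 1 => A t *ᵥ lqState A B x₀ u t + B t *ᵥ u t

/-- Quadratic cost `J(x₀, u)`. -/
def lqCost {n m : ℕ} (N : ℕ) (A : ℕ → Matrix (Fin n) (Fin n) ℝ)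
    (B : ℕ → Matrix (Fin n) (Fin m) ℝ) (Q : ℕ → Matrix (Fin n) (Fin n) ℝ)
    (R : ℕ → Matrix (Fin m) (Fin m) ℝ) (S : ℕ → Matrix (Fin m) (Fin n) ℝ)
    (H : Matrix (Fin n) (Fin n) ℝ) (x₀ : Fin n → ℝ) (u : ℕ → Fin m → ℝ) : ℝ :=
  (∑ t ∈ range N,
      (lqState A B x₀ u t ⬝ᵥ Q t *ᵥ lqState A B x₀ u t
        + 2 * (u t ⬝ᵥ S t *ᵥ lqState A B x₀ u t)
        + u t ⬝ᵥ R t *ᵥ u t))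
    + lqState A B x₀ u N ⬝ᵥ H *ᵥ lqState A B x₀ u N

/-- Closed-loop state `x_{t+1} = (A_t + B_t K_t) x_t + B_t v_t`. -/
def clState {n m : ℕ} (A : ℕ → Matrix (Fin n) (Fin n) ℝ) (B : ℕ → Matrix (Fin n) (Fin m) ℝ)
    (K : ℕ → Matrix (Fin m) (Fin n) ℝ) (v : ℕ → Fin m → ℝ) (x₀ : Fin n → ℝ) :
    ℕ → Fin n → ℝ
  | 0 => x₀
  | t + 1 => (A t + B t * K t) *ᵥ clState A B K v x₀ t + B t *ᵥ v t

/-- Outcome control `u_t = K_t x_t + v_t` of a closed-loop pair. -/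
def clControl {n m : ℕ} (A : ℕ → Matrix (Fin n) (Fin n) ℝ) (B : ℕ → Matrix (Fin n) (Fin m) ℝ)
    (K : ℕ → Matrix (Fin m) (Fin n) ℝ) (v : ℕ → Fin m → ℝ) (x₀ : Fin n → ℝ) (t : ℕ) :
    Fin m → ℝ :=
  K t *ᵥ clState A B K v x₀ t + v t

lemma dp_symm {k : ℕ} (M : Matrix (Fin k) (Fin k) ℝ) (hM : M.IsSymm) (a b : Fin k → ℝ) :
    a ⬝ᵥ M *ᵥ b = b ⬝ᵥ M *ᵥ a := by
  rw [dotProduct_mulVec, ← mulVec_transpose, hM.eq, dotProduct_comm]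

lemma dp_tr {k l : ℕ} (M : Matrix (Fin k) (Fin l) ℝ) (a : Fin l → ℝ) (b : Fin k → ℝ) :
    a ⬝ᵥ Mᵀ *ᵥ b = (M *ᵥ a) ⬝ᵥ b := by
  rw [dotProduct_mulVec, vecMul_transpose]

lemma dp_quad {a b c : ℕ} (M : Matrix (Fin a) (Fin b) ℝ) (Pp : Matrix (Fin a) (Fin a) ℝ)
    (Nm : Matrix (Fin a) (Fin c) ℝ) (x : Fin b → ℝ) (y : Fin c → ℝ) :
    x ⬝ᵥ (Mᵀ * Pp * Nm) *ᵥ y = (M *ᵥ x) ⬝ᵥ Pp *ᵥ (Nm *ᵥ y) := by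
  rw [Matrix.mul_assoc, ← mulVec_mulVec, ← mulVec_mulVec, dp_tr]

lemma step_identity {n m : ℕ} (Am : Matrix (Fin n) (Fin n) ℝ) (Bm : Matrix (Fin n) (Fin m) ℝ)
    (Qm Pm Pp : Matrix (Fin n) (Fin n) ℝ) (Rm : Matrix (Fin m) (Fin m) ℝ)
    (Sm : Matrix (Fin m) (Fin n) ℝ) (Km : Matrix (Fin m) (Fin n) ℝ)
    (hPp : Pp.IsSymm) (hRh : (Rm + Bmᵀ * Pp * Bm).IsSymm)
    (hK : (Rm + Bmᵀ * Pp * Bm) * Km = -(Bmᵀ * Pp * Am + Sm))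
    (hRic : Pm = Qm + Amᵀ * Pp * Am + (Amᵀ * Pp * Bm + Smᵀ) * Km)
    (x : Fin n → ℝ) (u : Fin m → ℝ) :
    x ⬝ᵥ Qm *ᵥ x + 2 * (u ⬝ᵥ Sm *ᵥ x) + u ⬝ᵥ Rm *ᵥ u
      + (Am *ᵥ x + Bm *ᵥ u) ⬝ᵥ Pp *ᵥ (Am *ᵥ x + Bm *ᵥ u) - x ⬝ᵥ Pm *ᵥ x
    = (u - Km *ᵥ x) ⬝ᵥ (Rm + Bmᵀ * Pp * Bm) *ᵥ (u - Km *ᵥ x) := by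
  have h1 : x ⬝ᵥ Pm *ᵥ x = x ⬝ᵥ Qm *ᵥ x + (Am *ᵥ x) ⬝ᵥ Pp *ᵥ (Am *ᵥ x)
      + (Bm *ᵥ Km *ᵥ x) ⬝ᵥ Pp *ᵥ (Am *ᵥ x) + (Km *ᵥ x) ⬝ᵥ Sm *ᵥ x := by
    rw [hRic, add_mulVec, add_mulVec, dotProduct_add, dotProduct_add, Matrix.add_mul,
      add_mulVec, dotProduct_add, dp_quad, ← mulVec_mulVec, dp_quad,
      dp_symm Pp hPp (Am *ᵥ x) (Bm *ᵥ Km *ᵥ x), ← mulVec_mulVec x Smᵀ Km, dp_tr,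
      dotProduct_comm (Sm *ᵥ x)]
    ring
  have eK : ∀ w : Fin m → ℝ, w ⬝ᵥ (Rm + Bmᵀ * Pp * Bm) *ᵥ (Km *ᵥ x)
      = -((Bm *ᵥ w) ⬝ᵥ Pp *ᵥ (Am *ᵥ x) + w ⬝ᵥ Sm *ᵥ x) := by
    intro w
    rw [mulVec_mulVec, hK, neg_mulVec, dotProduct_neg, add_mulVec, dotProduct_add, dp_quad]
  have eR : (u - Km *ᵥ x) ⬝ᵥ (Rm + Bmᵀ * Pp * Bm) *ᵥ (u - Km *ᵥ x)
      = u ⬝ᵥ (Rm + Bmᵀ * Pp * Bm) *ᵥ u - 2 * (u ⬝ᵥ (Rm + Bmᵀ * Pp * Bm) *ᵥ (Km *ᵥ x))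
        + (Km *ᵥ x) ⬝ᵥ (Rm + Bmᵀ * Pp * Bm) *ᵥ (Km *ᵥ x) := by
    rw [mulVec_sub, dotProduct_sub, sub_dotProduct, sub_dotProduct,
      dp_symm _ hRh (Km *ᵥ x) u]
    ring
  have eU : u ⬝ᵥ (Rm + Bmᵀ * Pp * Bm) *ᵥ u
      = u ⬝ᵥ Rm *ᵥ u + (Bm *ᵥ u) ⬝ᵥ Pp *ᵥ (Bm *ᵥ u) := by
    rw [add_mulVec, dotProduct_add, dp_quad]
  have eP : (Am *ᵥ x + Bm *ᵥ u) ⬝ᵥ Pp *ᵥ (Am *ᵥ x + Bm *ᵥ u)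
      = (Am *ᵥ x) ⬝ᵥ Pp *ᵥ (Am *ᵥ x) + 2 * ((Bm *ᵥ u) ⬝ᵥ Pp *ᵥ (Am *ᵥ x))
        + (Bm *ᵥ u) ⬝ᵥ Pp *ᵥ (Bm *ᵥ u) := by
    rw [mulVec_add, dotProduct_add, add_dotProduct, add_dotProduct,
      dp_symm Pp hPp (Am *ᵥ x) (Bm *ᵥ u)]
    ring
  rw [h1, eR, eK u, eK (Km *ᵥ x), eU, eP]
  ring

/-- sufficiency part of Theorem 1. -/
theorem stmt_3 {n m : ℕ} (hn : 0 < n) (hm : 0 < m) (N : ℕ) (hN : 0 < N)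
    (A : ℕ → Matrix (Fin n) (Fin n) ℝ) (B : ℕ → Matrix (Fin n) (Fin m) ℝ)
    (Q : ℕ → Matrix (Fin n) (Fin n) ℝ) (R : ℕ → Matrix (Fin m) (Fin m) ℝ)
    (S : ℕ → Matrix (Fin m) (Fin n) ℝ) (H : Matrix (Fin n) (Fin n) ℝ)
    (hQ : ∀ t, (Q t).IsSymm) (hR : ∀ t, (R t).IsSymm) (hH : H.IsSymm)
    (P : ℕ → Matrix (Fin n) (Fin n) ℝ)
    (K : ℕ → Matrix (Fin m) (Fin n) ℝ) (v : ℕ → Fin m → ℝ)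
    (hPsymm : ∀ t ≤ N, (P t).IsSymm) (hPN : P N = H)
    (hpsd : ∀ t < N, (R t + (B t)ᵀ * P (t + 1) * B t).PosSemidef)
    (hK : ∀ t < N, (R t + (B t)ᵀ * P (t + 1) * B t) * K t
      = -((B t)ᵀ * P (t + 1) * A t + S t))
    (hRic : ∀ t < N, P t = Q t + (A t)ᵀ * P (t + 1) * A t
      + ((A t)ᵀ * P (t + 1) * B t + (S t)ᵀ) * K t)
    (hv : ∀ t < N, (R t + (B t)ᵀ * P (t + 1) * B t) *ᵥ v t = 0) :
    (∀ x₀ : Fin n → ℝ, ∀ u : ℕ → Fin m → ℝ,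
      lqCost N A B Q R S H x₀ (clControl A B K v x₀) ≤ lqCost N A B Q R S H x₀ u) ∧
    (∀ x₀ : Fin n → ℝ,
      sInf (Set.range fun u : ℕ → Fin m → ℝ => lqCost N A B Q R S H x₀ u)
        = x₀ ⬝ᵥ P 0 *ᵥ x₀) := by
  have hRhsymm : ∀ t < N, (R t + (B t)ᵀ * P (t + 1) * B t).IsSymm := fun t ht =>
    (hpsd t ht).1
  -- cost decomposition
  have key : ∀ (x₀ : Fin n → ℝ) (u : ℕ → Fin m → ℝ),
      lqCost N A B Q R S H x₀ u = x₀ ⬝ᵥ P 0 *ᵥ x₀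
        + ∑ t ∈ range N, (u t - K t *ᵥ lqState A B x₀ u t) ⬝ᵥ
            (R t + (B t)ᵀ * P (t + 1) * B t) *ᵥ (u t - K t *ᵥ lqState A B x₀ u t) := by
    intro x₀ u
    set x := lqState A B x₀ u with hx
    have htel : (∑ t ∈ range N,
        (x (t + 1) ⬝ᵥ P (t + 1) *ᵥ x (t + 1) - x t ⬝ᵥ P t *ᵥ x t))
        = x N ⬝ᵥ P N *ᵥ x N - x 0 ⬝ᵥ P 0 *ᵥ x 0 :=
      Finset.sum_range_sub (fun t => x t ⬝ᵥ P t *ᵥ x t) N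
    have hterm : ∀ t ∈ range N,
        (x t ⬝ᵥ Q t *ᵥ x t + 2 * (u t ⬝ᵥ S t *ᵥ x t) + u t ⬝ᵥ R t *ᵥ u t)
          + (x (t + 1) ⬝ᵥ P (t + 1) *ᵥ x (t + 1) - x t ⬝ᵥ P t *ᵥ x t)
        = (u t - K t *ᵥ x t) ⬝ᵥ (R t + (B t)ᵀ * P (t + 1) * B t) *ᵥ (u t - K t *ᵥ x t) := by
      intro t ht
      rw [Finset.mem_range] at ht
      have hxs : x (t + 1) = A t *ᵥ x t + B t *ᵥ u t := rfl
      rw [hxs]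
      have := step_identity (A t) (B t) (Q t) (P t) (P (t + 1)) (R t) (S t) (K t)
        (hPsymm (t + 1) ht) (hRhsymm t ht) (hK t ht) (hRic t ht) (x t) (u t)
      linarith [this]
    have hx0 : x 0 = x₀ := rfl
    unfold lqCost
    rw [← hx, ← hPN, ← hx0]
    have hsum : ∑ t ∈ range N,
        ((x t ⬝ᵥ Q t *ᵥ x t + 2 * (u t ⬝ᵥ S t *ᵥ x t) + u t ⬝ᵥ R t *ᵥ u t)
          + (x (t + 1) ⬝ᵥ P (t + 1) *ᵥ x (t + 1) - x t ⬝ᵥ P t *ᵥ x t))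
        = (∑ t ∈ range N, (x t ⬝ᵥ Q t *ᵥ x t + 2 * (u t ⬝ᵥ S t *ᵥ x t) + u t ⬝ᵥ R t *ᵥ u t))
          + ∑ t ∈ range N, (x (t + 1) ⬝ᵥ P (t + 1) *ᵥ x (t + 1) - x t ⬝ᵥ P t *ᵥ x t) :=
      Finset.sum_add_distrib
    have hcong := Finset.sum_congr rfl hterm
    linarith [hsum, htel, hcong]
  -- outcome control state coincides with closed-loop state
  have hstate : ∀ (x₀ : Fin n → ℝ) (t : ℕ),
      lqState A B x₀ (clControl A B K v x₀) t = clState A B K v x₀ t := by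
    intro x₀ t
    induction t with
    | zero => rfl
    | succ t ih =>
      show A t *ᵥ lqState A B x₀ (clControl A B K v x₀) t + B t *ᵥ clControl A B K v x₀ t
        = (A t + B t * K t) *ᵥ clState A B K v x₀ t + B t *ᵥ v t
      rw [ih, clControl, mulVec_add, add_mulVec, mulVec_mulVec]
      abel
  -- cost of outcome control equals x₀ᵀ P₀ x₀
  have hopt : ∀ x₀ : Fin n → ℝ,
      lqCost N A B Q R S H x₀ (clControl A B K v x₀) = x₀ ⬝ᵥ P 0 *ᵥ x₀ := by
    intro x₀
    rw [key]
    have : ∀ t ∈ range N,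
        (clControl A B K v x₀ t - K t *ᵥ lqState A B x₀ (clControl A B K v x₀) t) ⬝ᵥ
          (R t + (B t)ᵀ * P (t + 1) * B t) *ᵥ
          (clControl A B K v x₀ t - K t *ᵥ lqState A B x₀ (clControl A B K v x₀) t) = 0 := by
      intro t ht
      rw [Finset.mem_range] at ht
      have hd : clControl A B K v x₀ t - K t *ᵥ lqState A B x₀ (clControl A B K v x₀) t
          = v t := by
        rw [hstate, clControl]; abel
      rw [hd, hv t ht, dotProduct_zero]
    rw [Finset.sum_congr rfl this]
    simp
  have hle : ∀ (x₀ : Fin n → ℝ) (u : ℕ → Fin m → ℝ),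
      lqCost N A B Q R S H x₀ (clControl A B K v x₀) ≤ lqCost N A B Q R S H x₀ u := by
    intro x₀ u
    rw [hopt, key]
    have : (0:ℝ) ≤ ∑ t ∈ range N, (u t - K t *ᵥ lqState A B x₀ u t) ⬝ᵥ
        (R t + (B t)ᵀ * P (t + 1) * B t) *ᵥ (u t - K t *ᵥ lqState A B x₀ u t) := by
      apply Finset.sum_nonneg
      intro t ht
      rw [Finset.mem_range] at ht
      simpa using (hpsd t ht).dotProduct_mulVec_nonneg (u t - K t *ᵥ lqState A B x₀ u t)
    linarith
  refine ⟨hle, fun x₀ => ?_⟩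
  apply le_antisymm
  · refine csInf_le ⟨x₀ ⬝ᵥ P 0 *ᵥ x₀, ?_⟩ ⟨clControl A B K v x₀, hopt x₀⟩
    rintro y ⟨u, rfl⟩
    rw [← hopt x₀]
    exact hle x₀ u
  · refine le_csInf (Set.range_nonempty _) ?_
    rintro y ⟨u, rfl⟩
    rw [← hopt x₀]
    exact hle x₀ u
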